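/- Let (S,*) be a unital involutive semigroup and φ : S → B(F) a positive definite function with φ(1) = 1_F, with associated GNS representation (π_φ, H_φ) on the reproducing kernel Hilbert space H_φ ⊆ F^S given by (π_φ(s)f)(t) = f(ts). Then the isometric inclusion ι : F → H_φ, ι(v)(s) = φ(s)v, is surjective if and only if φ is multiplicative, i.e., φ(st) = φ(s)φ(t) for all s,t ∈ S. -/

import Mathlib

local notation "⟪" x ", " y "⟫" => inner ℂ x y

/-- GNS-type lemma: let `(S,*)` be a unital involutive semigroup and `φ : S → B(F)` a
positive definite function with `φ(1) = 1`, realized by a `*`-representation `(π, H)` with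
an isometric inclusion `ι : F → H` whose `π(S)`-translates are total in `H` and
`⟨φ(s)v, w⟩ = ⟨π(s)ιv, ιw⟩`.  Then the inclusion `ι : F → H_φ` is surjective if and only
if `φ` is multiplicative, i.e. `φ(st) = φ(s)φ(t)` for all `s, t ∈ S`. -/
theorem statement9
    {S : Type*} [Monoid S] [StarMul S]
    {F H : Type*} [NormedAddCommGroup F] [InnerProductSpace ℂ F] [CompleteSpace F]
    [NormedAddCommGroup H] [InnerProductSpace ℂ H] [CompleteSpace H]
    (ι : F →ₗᵢ[ℂ] H)
    (π : S → (H →L[ℂ] H))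
    (hπ1 : π 1 = ContinuousLinearMap.id ℂ H)
    (hπm : ∀ s t : S, π (s * t) = (π s).comp (π t))
    (hπstar : ∀ (s : S) (v w : H), (⟪π (star s) v, w⟫ : ℂ) = ⟪v, π s w⟫)
    (hcyc : Dense (Submodule.span ℂ (⋃ s : S, π s '' Set.range ι) : Set H))
    (φ : S → (F →L[ℂ] F))
    (hφ1 : φ 1 = ContinuousLinearMap.id ℂ F)
    (hφ : ∀ (s : S) (v w : F), (⟪φ s v, w⟫ : ℂ) = ⟪π s (ι v), ι w⟫) :
    Function.Surjective ι ↔ ∀ s t : S, φ (s * t) = (φ s).comp (φ t) := by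

  constructor
  · intro hsurj
    have key : ∀ (s : S) (v : F), ι (φ s v) = π s (ι v) := by
      intro s v
      obtain ⟨u, hu⟩ := hsurj (π s (ι v))
      have h1 : φ s v = u := by
        apply ext_inner_right ℂ
        intro w
        rw [hφ, ← hu, ι.inner_map_map]
      rw [h1, hu]
    intro s t
    ext v
    apply ι.injective
    rw [ContinuousLinearMap.comp_apply, key, key, key, hπm, ContinuousLinearMap.comp_apply]
  · intro hmul
    have key : ∀ (s : S) (v : F), π s (ι v) = ι (φ s v) := by
      intro s v
      have hgen : ∀ (t : S) (w : F),
          (⟪π s (ι v) - ι (φ s v), π t (ι w)⟫ : ℂ) = 0 := by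
        intro t w
        have h1 : (⟪π s (ι v), π t (ι w)⟫ : ℂ) = ⟪φ (star t * s) v, w⟫ := by
          rw [← hπstar t (π s (ι v)) (ι w), hφ]
          congr 1
          rw [hπm]
          rfl
        have h2 : (⟪ι (φ s v), π t (ι w)⟫ : ℂ) = ⟪φ (star t * s) v, w⟫ := by
          rw [← hπstar t (ι (φ s v)) (ι w), hmul, ← hφ]
          rfl
        rw [inner_sub_left, h1, h2, sub_self]
      set K : Submodule ℂ H := Submodule.span ℂ (⋃ s : S, π s '' Set.range ι) with hK
      have hxK : (π s (ι v) - ι (φ s v)) ∈ Kᗮ := by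
        rw [Submodule.mem_orthogonal']
        intro u hu
        have hle : K ≤ LinearMap.ker (innerSL ℂ (π s (ι v) - ι (φ s v)) : H →ₗ[ℂ] ℂ) := by
          rw [hK, Submodule.span_le]
          rintro y ⟨_, ⟨t, rfl⟩, w, ⟨w', rfl⟩, rfl⟩
          exact hgen t w'
        exact hle hu
      have hbot : Kᗮ = ⊥ := by
        rw [← Submodule.topologicalClosure_eq_top_iff,
          ← Submodule.dense_iff_topologicalClosure_eq_top]
        exact hcyc
      rw [hbot, Submodule.mem_bot, sub_eq_zero] at hxK
      exact hxK
    intro y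
    have hsub : (Submodule.span ℂ (⋃ s : S, π s '' Set.range ι) : Set H)
        ⊆ Set.range ι := by
      have h1 : (⋃ s : S, π s '' Set.range ι) ⊆ (LinearMap.range ι.toLinearMap : Set H) := by
        rintro x ⟨_, ⟨t, rfl⟩, w, ⟨w', rfl⟩, rfl⟩
        exact ⟨φ t w', (key t w').symm⟩
      have h2 := Submodule.span_le.2 h1
      intro x hx
      exact h2 hx
    have hclosed : IsClosed (Set.range ι) :=
      (ι.isometry.isClosedEmbedding).isClosed_range
    have : (Set.univ : Set H) ⊆ Set.range ι := by
      rw [← hcyc.closure_eq]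
      exact hclosed.closure_subset_iff.2 hsub
    obtain ⟨v, hv⟩ := this (Set.mem_univ y)
    exact ⟨v, hv⟩
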